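/- Let c ∈ (−1,0) and f : ℝ → ℝ be real analytic satisfying f'(r) = f(r)² − rf(r) − c and f(r) > r for all r. Then f'(r) < 1 for all r ∈ ℝ. -/

import Mathlib

open Filter

/-- Let `c ∈ (−1,0)` and `f : ℝ → ℝ` be a (real-analytic) solution of
`f'(r) = f(r)² − rf(r) − c` with `f(r) > r` for all `r` and `f'(r) → 1` as `r → +∞`.
Then `f'(r) < 1` for all `r ∈ ℝ`. -/
theorem f_deriv_lt_one (c : ℝ) (hc1 : -1 < c) (hc2 : c < 0) (f : ℝ → ℝ)
    (hf : ∀ r : ℝ, HasDerivAt f (f r ^ 2 - r * f r - c) r)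
    (hgt : ∀ r : ℝ, r < f r)
    (hlim : Tendsto (fun r : ℝ => f r ^ 2 - r * f r - c) atTop (nhds 1)) :
    ∀ r : ℝ, f r ^ 2 - r * f r - c < 1 := by
  by_contra hcon
  push_neg at hcon
  obtain ⟨r₀, hr₀⟩ := hcon
  set g : ℝ → ℝ := fun r => f r ^ 2 - r * f r - c with hgdef
  set h : ℝ → ℝ := fun r => g r - 1 with hhdef
  have fdiff : Differentiable ℝ f := fun r => (hf r).differentiableAt
  have fcont : Continuous f := fdiff.continuous
  have hg' : ∀ r, HasDerivAt g (g r * (2 * f r - r) - f r) r := by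
    intro r
    have h1 : HasDerivAt (fun r => f r ^ 2) ((2 : ℕ) * f r ^ 1 * g r) r := (hf r).pow 2
    have h2 : HasDerivAt (fun r : ℝ => r * f r) (1 * f r + r * g r) r :=
      (hasDerivAt_id r).mul (hf r)
    have := (h1.sub h2).sub_const c
    refine this.congr_deriv ?_
    push_cast
    ring
  have hh' : ∀ r, HasDerivAt h (g r * (2 * f r - r) - f r) r := fun r => (hg' r).sub_const 1
  set F : ℝ → ℝ := fun r => ∫ t in (0:ℝ)..r, (2 * f t - t) with hFdef
  have contint : Continuous fun t : ℝ => 2 * f t - t := by continuity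
  have hF : ∀ r, HasDerivAt F (2 * f r - r) r := fun r =>
    (contint.integral_hasStrictDerivAt 0 r).hasDerivAt
  set w : ℝ → ℝ := fun r => h r * Real.exp (-(F r)) with hwdef
  have hw : ∀ r, HasDerivAt w ((f r - r) * Real.exp (-(F r))) r := by
    intro r
    have he : HasDerivAt (fun r => Real.exp (-(F r)))
        (Real.exp (-(F r)) * (-(2 * f r - r))) r := by
      simpa using ((hF r).neg).exp
    have := (hh' r).mul he
    refine this.congr_deriv ?_
    simp only [hhdef]
    ring
  have hwmono : StrictMono w := by
    apply strictMono_of_deriv_pos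
    intro r
    rw [(hw r).deriv]
    exact mul_pos (sub_pos.mpr (hgt r)) (Real.exp_pos _)
  have hpos : ∀ r, r₀ < r → 0 < h r := by
    intro r hr
    have h₀ : 0 ≤ w r₀ := by
      apply mul_nonneg _ (Real.exp_pos _).le
      simp only [hhdef, hgdef]
      linarith
    have hwr : 0 < h r * Real.exp (-(F r)) := lt_of_le_of_lt h₀ (hwmono hr)
    nlinarith [Real.exp_pos (-(F r))]
  set r₂ : ℝ := max r₀ 0 + 1 with hr₂def
  have hr₂0 : 0 < r₂ := by
    have := le_max_right r₀ (0:ℝ); linarith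
  have hr₂r₀ : r₀ < r₂ := by
    have := le_max_left r₀ (0:ℝ); linarith
  set u : ℝ → ℝ := fun r => f r - r with hudef
  have hu' : ∀ r, HasDerivAt u (h r) r := by
    intro r
    have := (hf r).sub (hasDerivAt_id r)
    exact this
  have humono : MonotoneOn u (Set.Ici r₂) := by
    apply monotoneOn_of_deriv_nonneg (convex_Ici r₂)
    · exact (fcont.sub continuous_id).continuousOn
    · exact fun r _ => (hu' r).differentiableAt.differentiableWithinAt
    · intro r hr
      rw [interior_Ici] at hr
      rw [(hu' r).deriv]
      exact (hpos r (lt_trans hr₂r₀ hr)).le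
  set δ : ℝ := u r₂ with hδdef
  have hδpos : 0 < δ := sub_pos.mpr (hgt r₂)
  -- derivative bound on [r₂, ∞)
  have hd : ∀ r, r₂ ≤ r → δ ≤ g r * (2 * f r - r) - f r := by
    intro r hr
    have h1 : 0 < h r := hpos r (lt_of_lt_of_le hr₂r₀ hr)
    have h2 : (0:ℝ) < r := lt_of_lt_of_le hr₂0 hr
    have h3 : r < f r := hgt r
    have h4 : δ ≤ u r := humono Set.self_mem_Ici hr hr
    have h5 : u r = f r - r := rfl
    have hg1 : g r = h r + 1 := by simp [hhdef]
    nlinarith [h1, h2, h3]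
  set ψ : ℝ → ℝ := fun r => h r - δ * r with hψdef
  have hψ' : ∀ r, HasDerivAt ψ ((g r * (2 * f r - r) - f r) - δ) r := by
    intro r
    exact (hh' r).sub ((hasDerivAt_id r).const_mul δ |>.congr_deriv (by ring))
  have hψmono : MonotoneOn ψ (Set.Ici r₂) := by
    apply monotoneOn_of_deriv_nonneg (convex_Ici r₂)
    · exact ContinuousOn.sub (fun r _ => (hh' r).continuousAt.continuousWithinAt)
        (continuous_const.mul continuous_id).continuousOn
    · exact fun r _ => (hψ' r).differentiableAt.differentiableWithinAt
    · intro r hr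
      rw [interior_Ici] at hr
      rw [(hψ' r).deriv]
      linarith [hd r hr.le]
  have hbound : ∀ r, r₂ ≤ r → δ * r + (h r₂ - δ * r₂) ≤ h r := by
    intro r hr
    have := hψmono Set.self_mem_Ici hr hr
    simp only [hψdef] at this
    linarith
  have hlim0 : Tendsto h atTop (nhds 0) := by
    have := hlim.sub_const 1
    simpa using this
  have htop : Tendsto h atTop atTop := by
    apply tendsto_atTop_mono' atTop
      ((eventually_ge_atTop r₂).mono fun r hr => hbound r hr)
    exact tendsto_atTop_add_const_right _ _ (tendsto_id.const_mul_atTop hδpos)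
  exact not_tendsto_nhds_of_tendsto_atTop htop 0 hlim0
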